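/- arXiv:1404.1549 — 3 statements merged into one kernel-verified Lean document; each statement's English description precedes it below -/
import Mathlib

section
/- Let G be a connected non-bipartite graph and let p : X → G be a double covering such that X is bipartite. Then X is the Kronecker double covering over G; that is, there is a graph isomorphism φ : X → K_2 × G with pr_G ∘ φ = p, where pr_G : K_2 × G → G is the second projection. -/
/-- A graph: a vertex type with a symmetric edge relation (loops allowed). -/
structure Graph' where
  V : Type
  E : V → V → Prop
  symm : ∀ ⦃x y⦄, E x y → E y x

/-- Graph homomorphisms. -/
def Graph'.Hom (G H : Graph') : Type :=
  {f : G.V → H.V // ∀ ⦃x y⦄, G.E x y → H.E (f x) (f y)}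

/-- Graph isomorphisms: bijective homomorphisms whose inverse is a homomorphism. -/
structure Graph'.Iso (G H : Graph') extends G.V ≃ H.V where
  edge_iff : ∀ x y, G.E x y ↔ H.E (toEquiv x) (toEquiv y)

/-- The complete graph `K₂` on two vertices. -/
def K2 : Graph' := ⟨Fin 2, fun x y => x ≠ y, fun _ _ h => h.symm⟩

/-- The tensor (categorical) product of graphs. -/
def Graph'.tensor (G H : Graph') : Graph' :=
  ⟨G.V × H.V, fun p q => G.E p.1 q.1 ∧ H.E p.2 q.2,
   fun _ _ h => ⟨G.symm h.1, H.symm h.2⟩⟩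

/-- No isolated vertices. -/
def Graph'.NoIsolated (G : Graph') : Prop := ∀ x, ∃ y, G.E x y

/-- The box complex `B(G)`: pairs of nonempty subsets `(σ, τ)` with `σ × τ ⊆ E(G)`. -/
def Graph'.Box (G : Graph') : Type :=
  {p : Set G.V × Set G.V //
    p.1.Nonempty ∧ p.2.Nonempty ∧ ∀ x ∈ p.1, ∀ y ∈ p.2, G.E x y}

instance (G : Graph') : PartialOrder G.Box where
  le a b := a.1.1 ⊆ b.1.1 ∧ a.1.2 ⊆ b.1.2
  le_refl a := ⟨subset_rfl, subset_rfl⟩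
  le_trans a b c h1 h2 := ⟨h1.1.trans h2.1, h1.2.trans h2.2⟩
  le_antisymm a b h1 h2 :=
    Subtype.ext (Prod.ext (h1.1.antisymm h2.1) (h1.2.antisymm h2.2))

/-- The canonical involution `(σ,τ) ↦ (τ,σ)` of the box complex. -/
def Graph'.Box.flip {G : Graph'} (p : G.Box) : G.Box :=
  ⟨(p.1.2, p.1.1), p.2.2.1, p.2.1, fun x hx y hy => G.symm (p.2.2.2 y hy x hx)⟩

/-- A graph is connected if any two vertices are joined by a walk. -/
def Graph'.Connected (G : Graph') : Prop := ∀ x y : G.V, Relation.ReflTransGen G.E x y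

/-- A graph is bipartite if it admits a homomorphism to `K₂`. -/
def Graph'.Bipartite (G : Graph') : Prop :=
  ∃ c : G.V → Fin 2, ∀ ⦃x y⦄, G.E x y → c x ≠ c y

/-- A covering: a homomorphism restricting to a bijection on each neighborhood. -/
def Graph'.IsCovering {X G : Graph'} (p : X.Hom G) : Prop :=
  ∀ x : X.V, Set.BijOn p.1 {y | X.E x y} {y | G.E (p.1 x) y}

/-- A double covering: a covering all of whose fibers have exactly two elements. -/
def Graph'.IsDoubleCovering {X G : Graph'} (p : X.Hom G) : Prop :=
  Graph'.IsCovering p ∧ ∀ v : G.V, ∃ a b : X.V, a ≠ b ∧ {x | p.1 x = v} = {a, b}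

/-- if `G` is connected and non-bipartite and `p : X → G` is a double
covering with `X` bipartite, then `X` is the Kronecker double covering of `G`: there
is a graph isomorphism `φ : X → K₂ × G` with `pr_G ∘ φ = p`. -/
theorem bipartite_double_covering_is_kronecker
    (G X : Graph') (hconn : G.Connected) (hnbip : ¬ G.Bipartite)
    (hXbip : X.Bipartite) (p : X.Hom G) (hp : Graph'.IsDoubleCovering p) :
    ∃ φ : X.Iso (K2.tensor G), ∀ x : X.V, (φ.toEquiv x).2 = p.1 x := by
  classical
  obtain ⟨c, hc⟩ := hXbip
  obtain ⟨hcov, hfib⟩ := hp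
  have two : ∀ (a b d : Fin 2), a ≠ d → b ≠ d → a = b := by decide
  have two' : ∀ (a b k : Fin 2), a ≠ k → b ≠ a → b = k := by decide
  have lift : ∀ (a : X.V) (w : G.V), G.E (p.1 a) w → ∃ s, X.E a s ∧ p.1 s = w := by
    intro a w hw
    obtain ⟨s, hs, hps⟩ := (hcov a).2.2 hw
    exact ⟨s, hs, hps⟩
  have nonempty : ∀ v, ∃ a, p.1 a = v := by
    intro v
    obtain ⟨a, b, hab, hset⟩ := hfib v
    have : a ∈ {x | p.1 x = v} := by rw [hset]; exact Set.mem_insert _ _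
    exact ⟨a, this⟩
  have monoProp : ∀ v w, G.E v w →
      (∀ a b, p.1 a = v → p.1 b = v → c a = c b) →
      (∀ a b, p.1 a = w → p.1 b = w → c a = c b) := by
    intro v w hvw hm a b hpa hpb
    obtain ⟨s, hs, hps⟩ := lift a v (by rw [hpa]; exact G.symm hvw)
    obtain ⟨t, ht, hpt⟩ := lift b v (by rw [hpb]; exact G.symm hvw)
    have hst := hm s t hps hpt
    refine two _ _ (c s) (hc hs) ?_
    rw [hst]; exact hc ht
  have allBi : ∀ v, ∃ a b, p.1 a = v ∧ p.1 b = v ∧ c a ≠ c b := by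
    by_contra h
    push_neg at h
    obtain ⟨v0, hv0⟩ := h
    have allMono : ∀ w, ∀ a b, p.1 a = w → p.1 b = w → c a = c b := by
      intro w
      have hwalk := hconn v0 w
      induction hwalk with
      | refl => intro a b ha hb; exact hv0 a b ha hb
      | tail hxy hE ih => exact monoProp _ _ hE ih
    apply hnbip
    refine ⟨fun v => c (Classical.choose (nonempty v)), ?_⟩
    intro v w hvw
    show c (Classical.choose (nonempty v)) ≠ c (Classical.choose (nonempty w))
    have hpa : p.1 (Classical.choose (nonempty v)) = v := Classical.choose_spec (nonempty v)
    obtain ⟨s, hs, hps⟩ := lift _ w (by rw [hpa]; exact hvw)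
    have hmw : c (Classical.choose (nonempty w)) = c s :=
      allMono w _ _ (Classical.choose_spec (nonempty w)) hps
    rw [hmw]
    exact hc hs
  have fibKey : ∀ v, ∃ a b, p.1 a = v ∧ p.1 b = v ∧ c a ≠ c b ∧
      ∀ x, p.1 x = v → x = a ∨ x = b := by
    intro v
    obtain ⟨a, b, hpa, hpb, hcab⟩ := allBi v
    obtain ⟨a', b', hab', hset⟩ := hfib v
    have mem : ∀ x, p.1 x = v → x = a' ∨ x = b' := by
      intro x hx
      have hx' : x ∈ {y | p.1 y = v} := hx
      rw [hset] at hx'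
      simpa using hx'
    have hane : a ≠ b := fun h => hcab (by rw [h])
    rcases mem a hpa with rfl | rfl <;> rcases mem b hpb with h2 | h2
    · exact absurd h2.symm hane
    · subst h2; exact ⟨a, b, hpa, hpb, hcab, mem⟩
    · subst h2; exact ⟨a, b, hpa, hpb, hcab, fun x hx => (mem x hx).symm⟩
    · exact absurd h2.symm hane
  have inj : ∀ x y, c x = c y → p.1 x = p.1 y → x = y := by
    intro x y hcxy hpxy
    obtain ⟨a, b, hpa, hpb, hcab, huniq⟩ := fibKey (p.1 y)
    rcases huniq x hpxy with rfl | rfl <;> rcases huniq y rfl with rfl | rfl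
    · rfl
    · exact absurd hcxy hcab
    · exact absurd hcxy.symm hcab
    · rfl
  have surj : ∀ k v, ∃ x, c x = k ∧ p.1 x = v := by
    intro k v
    obtain ⟨a, b, hpa, hpb, hcab, _⟩ := fibKey v
    by_cases h : c a = k
    · exact ⟨a, h, hpa⟩
    · exact ⟨b, two' (c a) (c b) k h (Ne.symm hcab), hpb⟩
  have hbij : Function.Bijective (fun x : X.V => ((c x, p.1 x) : Fin 2 × G.V)) := by
    constructor
    · intro x y hxy
      exact inj x y (congrArg Prod.fst hxy) (congrArg Prod.snd hxy)
    · rintro ⟨k, v⟩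
      obtain ⟨x, h1, h2⟩ := surj k v
      exact ⟨x, by simp [h1, h2]⟩
  refine ⟨⟨Equiv.ofBijective _ hbij, ?_⟩, fun x => rfl⟩
  intro x y
  constructor
  · intro h
    exact ⟨hc h, p.2 h⟩
  · rintro ⟨h1, h2⟩
    have h2' : G.E (p.1 x) (p.1 y) := h2
    obtain ⟨s, hs, hps⟩ := lift x (p.1 y) h2'
    have hcs : c s = c y := two (c s) (c y) (c x) (Ne.symm (hc hs)) (Ne.symm h1)
    have : s = y := inj s y hcs hps
    rwa [this] at hs
end

section
/- Let (X, ε) be a 2-colored graph admitting an odd involution. Then the simplicial complexes N_1(X) and N_2(X) are isomorphic. In particular, for every graph G the complexes N_1(K_2 × G), N_2(K_2 × G) and N(G) are pairwise isomorphic, where K_2 × G is 2-colored by the first projection. -/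
/-- An abstract simplicial complex, given by its vertex type and its simplices
(nonempty finite vertex sets). -/
structure SComplex where
  V : Type
  S : Finset V → Prop

/-- Isomorphism of abstract simplicial complexes: a bijection of vertex sets under
which a finite set is a simplex iff its image is a simplex. -/
def SComplex.Iso (A B : SComplex) : Prop :=
  ∃ e : A.V ≃ B.V, ∀ s : Finset A.V, A.S s ↔ B.S (s.map e.toEmbedding)

/-- The neighborhood complex `N(G)`: vertices are the non-isolated vertices of `G`,
simplices the nonempty finite sets contained in the neighborhood of some vertex. -/
def Graph'.NC (G : Graph') : SComplex where
  V := {x : G.V // ∃ y, G.E x y}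
  S s := s.Nonempty ∧ ∃ v : G.V, ∀ x ∈ s, G.E v x.val

/-- For a 2-colored graph `(X, ε)`, `Nᵢ(X)` is the full subcomplex of `N(X)` induced
on the non-isolated vertices of color `i`. -/
def Graph'.NCi (X : Graph') (ε : X.V → Fin 2) (i : Fin 2) : SComplex where
  V := {x : X.V // (∃ y, X.E x y) ∧ ε x = i}
  S s := s.Nonempty ∧ ∃ v : X.V, ∀ x ∈ s, X.E v x.val


lemma SComplex.Iso.symm' {A B : SComplex} (h : A.Iso B) : B.Iso A := by
  obtain ⟨e, he⟩ := h
  refine ⟨e.symm, fun s => ?_⟩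
  have key : (s.map e.symm.toEmbedding).map e.toEmbedding = s := by
    ext x; simp [Finset.mem_map]
  conv_lhs => rw [← key]
  exact (he _).symm

lemma SComplex.Iso.trans' {A B C : SComplex} (h : A.Iso B) (h' : B.Iso C) : A.Iso C := by
  obtain ⟨e, he⟩ := h
  obtain ⟨f, hf⟩ := h'
  refine ⟨e.trans f, fun s => ?_⟩
  have key : s.map (e.trans f).toEmbedding = (s.map e.toEmbedding).map f.toEmbedding := by
    rw [Finset.map_map]; rfl
  rw [key]
  exact (he s).trans (hf _)

lemma fin2_cases (a : Fin 2) : a = 0 ∨ a = 1 := by omega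

/-- `K2.V` is definitionally `Fin 2`. -/
def f2 : K2.V → Fin 2 := fun a => a

/-- `Fin 2` to `K2.V`. -/
def c2 : Fin 2 → K2.V := fun a => a

lemma odd_inv_main (X : Graph') (ε : X.V → Fin 2)
    (τ : X.V → X.V) (hτ : ∀ ⦃x y⦄, X.E x y → X.E (τ x) (τ y))
    (hinv : ∀ x, τ (τ x) = x) (hodd : ∀ x, ε (τ x) ≠ ε x) :
    (X.NCi ε 0).Iso (X.NCi ε 1) := by
  have hni : ∀ x : X.V, (∃ y, X.E x y) → ∃ y, X.E (τ x) y := by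
    rintro x ⟨y, hy⟩; exact ⟨τ y, hτ hy⟩
  have hc : ∀ x : X.V, ε x = 0 → ε (τ x) = 1 := by
    intro x hx
    rcases fin2_cases (ε (τ x)) with h | h
    · exact absurd (h.trans hx.symm) (hodd x)
    · exact h
  have hc' : ∀ x : X.V, ε x = 1 → ε (τ x) = 0 := by
    intro x hx
    rcases fin2_cases (ε (τ x)) with h | h
    · exact h
    · exact absurd (h.trans hx.symm) (hodd x)
  refine ⟨⟨fun x => ⟨τ x.1, hni x.1 x.2.1, hc x.1 x.2.2⟩,
          fun x => ⟨τ x.1, hni x.1 x.2.1, hc' x.1 x.2.2⟩,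
          fun x => Subtype.ext (hinv x.1), fun x => Subtype.ext (hinv x.1)⟩,
          fun s => ?_⟩
  constructor
  · rintro ⟨hne, v, hv⟩
    refine ⟨hne.map, τ v, ?_⟩
    intro x hx
    replace hx := Finset.mem_map.mp hx
    obtain ⟨a, ha, rfl⟩ := hx
    exact hτ (hv a ha)
  · rintro ⟨hne, v, hv⟩
    refine ⟨Finset.map_nonempty.mp hne, τ v, ?_⟩
    intro x hx
    have h1 : X.E v (τ x.1) := hv _ (Finset.mem_map_of_mem _ hx)
    have h2 := hτ h1
    rwa [hinv] at h2

lemma tensor_NCi_zero_iso (G : Graph') :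
    ((K2.tensor G).NCi (fun q : Fin 2 × G.V => q.1) 0).Iso G.NC := by
  refine ⟨⟨fun x => ⟨x.1.2, by
      obtain ⟨⟨p, hp⟩, h0⟩ := x.2; exact ⟨p.2, hp.2⟩⟩,
    fun v => ⟨(c2 0, v.1), ⟨⟨(c2 1, v.2.choose),
      (by decide : (0 : Fin 2) ≠ 1), v.2.choose_spec⟩, rfl⟩⟩,
    fun x => Subtype.ext (by
      have h0 : x.1.1 = (0 : Fin 2) := x.2.2
      exact Prod.ext h0.symm rfl),
    fun v => rfl⟩, fun s => ?_⟩
  constructor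
  · rintro ⟨hne, v, hv⟩
    refine ⟨hne.map, v.2, ?_⟩
    intro x hx
    replace hx := Finset.mem_map.mp hx
    obtain ⟨a, ha, rfl⟩ := hx
    exact (hv a ha).2
  · rintro ⟨hne, v, hv⟩
    refine ⟨Finset.map_nonempty.mp hne, (c2 1, v), ?_⟩
    intro x hx
    refine ⟨?_, hv _ (Finset.mem_map_of_mem _ hx)⟩
    have h0 : x.1.1 = (0 : Fin 2) := x.2.2
    show (1 : Fin 2) ≠ x.1.1
    rw [h0]; decide

/-- if a 2-colored graph `(X, ε)` admits an odd involution, then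
`N₁(X) ≅ N₂(X)`; in particular, for every graph `G`, the complexes `N₁(K₂ × G)`,
`N₂(K₂ × G)` and `N(G)` are pairwise isomorphic (with `K₂ × G` colored by the first
projection). -/
theorem NCi_iso_of_odd_involution :
    (∀ (X : Graph') (ε : X.V → Fin 2), (∀ ⦃x y⦄, X.E x y → ε x ≠ ε y) →
      ∀ τ : X.V → X.V, (∀ ⦃x y⦄, X.E x y → X.E (τ x) (τ y)) →
        (∀ x, τ (τ x) = x) → (∀ x, ε (τ x) ≠ ε x) →
          ((X.NCi ε 0).Iso (X.NCi ε 1))) ∧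
    (∀ G : Graph',
      (((K2.tensor G).NCi (fun q : Fin 2 × G.V => q.1) 0).Iso
        ((K2.tensor G).NCi (fun q : Fin 2 × G.V => q.1) 1)) ∧
      (((K2.tensor G).NCi (fun q : Fin 2 × G.V => q.1) 0).Iso G.NC) ∧
      (((K2.tensor G).NCi (fun q : Fin 2 × G.V => q.1) 1).Iso G.NC)) := by
  constructor
  · intro X ε _ τ hτ hinv hodd
    exact odd_inv_main X ε τ hτ hinv hodd
  · intro G
    have h0 : ((K2.tensor G).NCi (fun q : Fin 2 × G.V => q.1) 0).Iso
        ((K2.tensor G).NCi (fun q : Fin 2 × G.V => q.1) 1) := by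
      apply odd_inv_main (K2.tensor G) (fun q => q.1)
        (fun q : Fin 2 × G.V => (q.1 + 1, q.2))
      · rintro x y ⟨h1, h2⟩
        refine ⟨?_, h2⟩
        have h1' : f2 x.1 ≠ f2 y.1 := h1
        show f2 x.1 + 1 ≠ f2 y.1 + 1
        omega
      · intro x
        refine Prod.ext ?_ rfl
        show f2 x.1 + 1 + 1 = f2 x.1
        omega
      · intro x
        show f2 x.1 + 1 ≠ f2 x.1
        omega
    exact ⟨h0, tensor_NCi_zero_iso G, h0.symm'.trans' (tensor_NCi_zero_iso G)⟩
end

section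
/- Let G be a connected graph with at least one edge. Then the box complex B(G) is a connected poset (any two elements are joined by a finite sequence of elements in which consecutive elements are comparable) if and only if G is not bipartite. -/
namespace BoxAux

variable {G : Graph'}

/-- connectivity relation on the box complex -/
def C (p q : G.Box) : Prop :=
  Relation.ReflTransGen (fun p q : G.Box => p ≤ q ∨ q ≤ p) p q

lemma C.symm {p q : G.Box} (h : C p q) : C q p :=
  @Std.Symm.symm _ _ (@Relation.ReflTransGen.stdSymm _ _ ⟨fun _ _ h => h.symm⟩) _ _ h

lemma C.trans {p q r : G.Box} (h : C p q) (h' : C q r) : C p r :=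
  Relation.ReflTransGen.trans h h'

def atom {x y : G.V} (h : G.E x y) : G.Box :=
  ⟨({x}, {y}), ⟨x, rfl⟩, ⟨y, rfl⟩, by
    rintro a ha b hb
    rw [Set.mem_singleton_iff] at ha hb
    subst ha; subst hb; exact h⟩

lemma atom_le {p : G.Box} {x y : G.V} (hx : x ∈ p.1.1) (hy : y ∈ p.1.2) :
    atom (p.2.2.2 x hx y hy) ≤ p := by
  constructor <;> · intro a ha; simp only [atom, Set.mem_singleton_iff] at ha; subst ha; assumption

lemma C_atom_self (p : G.Box) {x y : G.V} (hx : x ∈ p.1.1) (hy : y ∈ p.1.2) :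
    C (atom (p.2.2.2 x hx y hy)) p :=
  Relation.ReflTransGen.single (Or.inl (atom_le hx hy))

lemma C_snd {x y y' : G.V} (h : G.E x y) (h' : G.E x y') :
    C (atom h) (atom h') := by
  refine Relation.ReflTransGen.head (Or.inl ?_) (Relation.ReflTransGen.single (Or.inr ?_))
    (b := ⟨({x}, {y, y'}), ⟨x, rfl⟩, ⟨y, Or.inl rfl⟩, by
      rintro a ha b hb
      rw [Set.mem_singleton_iff] at ha; subst ha
      rcases hb with rfl | hb
      · exact h
      · rw [Set.mem_singleton_iff] at hb; subst hb; exact h'⟩)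
  · exact ⟨subset_rfl, by intro b hb; simp only [atom, Set.mem_singleton_iff] at hb; exact Or.inl hb⟩
  · exact ⟨subset_rfl, by intro b hb; simp only [atom, Set.mem_singleton_iff] at hb; subst hb; exact Or.inr rfl⟩

lemma flip_mono {p q : G.Box} (h : p ≤ q) : p.flip ≤ q.flip := ⟨h.2, h.1⟩

lemma C_flip {p q : G.Box} (h : C p q) : C p.flip q.flip :=
  Relation.ReflTransGen.lift Graph'.Box.flip
    (fun _ _ hab => hab.imp flip_mono flip_mono) _ _ h

lemma atom_flip {x y : G.V} (h : G.E x y) : (atom h).flip = atom (G.symm h) :=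
  Subtype.ext rfl

lemma classify {p q : G.V} (hpq : G.E p q) {x : G.V} (hw : Relation.ReflTransGen G.E x p) :
    ∀ {y : G.V} (hxy : G.E x y),
      C (atom hxy) (atom hpq) ∨ C (atom hxy) (atom (G.symm hpq)) := by
  induction hw using Relation.ReflTransGen.head_induction_on with
  | refl => intro y hxy; exact Or.inl (C_snd hxy hpq)
  | head hxz _ ih =>
      intro y hxy
      have h1 : C (atom hxy) (atom hxz) := C_snd hxy hxz
      have h2 : (atom (G.symm (G.symm hxz)) : G.Box) = atom hxz := Subtype.ext rfl
      have h3 : (atom (G.symm (G.symm hpq)) : G.Box) = atom hpq := Subtype.ext rfl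
      rcases ih (G.symm hxz) with h | h
      · have h4 := C_flip h
        rw [atom_flip, atom_flip, h2] at h4
        exact Or.inr (h1.trans h4)
      · have h4 := C_flip h
        rw [atom_flip, atom_flip, h2, h3] at h4
        exact Or.inl (h1.trans h4)

end BoxAux

namespace BoxAux
variable {G : Graph'}

lemma C_flip_atom {x y p q : G.V} (hxy : G.E x y) (hpq : G.E p q)
    (h : C (atom (G.symm hxy)) (atom hpq)) : C (atom hxy) (atom (G.symm hpq)) := by
  have h4 := C_flip h
  rw [atom_flip, atom_flip] at h4
  rwa [show (atom (G.symm (G.symm hxy)) : G.Box) = atom hxy from Subtype.ext rfl] at h4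

lemma all_connected {p q : G.V} (hpq : G.E p q) (hconn : Graph'.Connected G)
    (hflip : C (atom hpq) (atom (G.symm hpq))) : ∀ a b : G.Box, C a b := by
  have key : ∀ a : G.Box, C a (atom hpq) := by
    intro a
    obtain ⟨x, hx⟩ := a.2.1
    obtain ⟨y, hy⟩ := a.2.2.1
    have h1 : C (atom (a.2.2.2 x hx y hy)) a := C_atom_self a hx hy
    rcases classify hpq (hconn x p) (a.2.2.2 x hx y hy) with h | h
    · exact h1.symm.trans h
    · exact h1.symm.trans (h.trans hflip.symm)
  intro a b
  exact (key a).trans (key b).symm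

theorem main (G : Graph')
    (hconn : Graph'.Connected G) (hedge : ∃ x y : G.V, G.E x y) :
    (∀ a b : G.Box, Relation.ReflTransGen (fun p q : G.Box => p ≤ q ∨ q ≤ p) a b) ↔
      ¬ Graph'.Bipartite G := by
  obtain ⟨p, q, hpq⟩ := hedge
  constructor
  · rintro hC ⟨c, hc⟩
    have fin2 : ∀ a b d : Fin 2, a ≠ d → b ≠ d → a = b := by decide
    have hsame : ∀ (b : G.Box), ∀ x ∈ b.1.1, ∀ x' ∈ b.1.1, c x = c x' := by
      intro b x hx x' hx'
      obtain ⟨y, hy⟩ := b.2.2.1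
      exact fin2 _ _ _ (hc (b.2.2.2 x hx y hy)) (hc (b.2.2.2 x' hx' y hy))
    classical
    set f : G.Box → Fin 2 := fun b => c b.2.1.choose with hf
    have step : ∀ a b : G.Box, (a ≤ b ∨ b ≤ a) → f a = f b := by
      rintro a b (h | h)
      · exact hsame b _ (h.1 a.2.1.choose_spec) _ b.2.1.choose_spec
      · exact (hsame a _ (h.1 b.2.1.choose_spec) _ a.2.1.choose_spec).symm
    have const : ∀ a b : G.Box, C a b → f a = f b := by
      intro a b h
      induction h with
      | refl => rfl
      | tail _ hstep ih => exact ih.trans (step _ _ hstep)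
    have e1 : f (atom hpq) = c p := by
      have h := (atom hpq : G.Box).2.1.choose_spec
      simp only [atom, Set.mem_singleton_iff] at h
      exact congrArg c h
    have e2 : f (atom (G.symm hpq)) = c q := by
      have h := (atom (G.symm hpq) : G.Box).2.1.choose_spec
      simp only [atom, Set.mem_singleton_iff] at h
      exact congrArg c h
    exact hc hpq (e1 ▸ e2 ▸ const _ _ (hC (atom hpq) (atom (G.symm hpq))))
  · intro hnb a b
    by_contra hnab
    apply hnb
    classical
    have noiso : ∀ x, ∃ y, G.E x y := by
      intro x
      rcases (hconn x p).cases_head with rfl | ⟨z, hz, _⟩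
      · exact ⟨q, hpq⟩
      · exact ⟨z, hz⟩
    choose nb hnb2 using noiso
    have hflip : ¬ C (atom hpq) (atom (G.symm hpq)) := by
      intro h; exact hnab (all_connected hpq hconn h a b)
    refine ⟨fun x => if C (atom (hnb2 x)) (atom hpq) then 0 else 1, ?_⟩
    intro x y hxy heq
    apply hflip
    have wd : ∀ (x y : G.V) (h : G.E x y),
        (if C (atom (hnb2 x)) (atom hpq) then (0 : Fin 2) else 1) = 0 ↔
          C (atom h) (atom hpq) := by
      intro x y h
      have hcc : C (atom h) (atom (hnb2 x)) := C_snd h (hnb2 x)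
      by_cases hca : C (atom (hnb2 x)) (atom hpq)
      · rw [if_pos hca]
        exact ⟨fun _ => hcc.trans hca, fun _ => rfl⟩
      · rw [if_neg hca]
        exact ⟨fun h0 => absurd h0 one_ne_zero,
               fun hcon => absurd (hcc.symm.trans hcon) hca⟩
    by_cases hA : C (atom hxy) (atom hpq)
    · -- c x = 0, hence c y = 0
      have hx0 := (wd x y hxy).2 hA
      have hy0 : (if C (atom (hnb2 y)) (atom hpq) then (0 : Fin 2) else 1) = 0 :=
        heq.symm.trans hx0
      have hB : C (atom hxy) (atom (G.symm hpq)) :=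
        C_flip_atom hxy hpq ((wd y x (G.symm hxy)).1 hy0)
      exact hA.symm.trans hB
    · have hB : C (atom hxy) (atom (G.symm hpq)) := by
        rcases classify hpq (hconn x p) hxy with h | h
        · exact absurd h hA
        · exact h
      have hx0 : (if C (atom (hnb2 x)) (atom hpq) then (0 : Fin 2) else 1) ≠ 0 :=
        fun h0 => hA ((wd x y hxy).1 h0)
      have hy0 : ¬ C (atom (G.symm hxy)) (atom hpq) :=
        fun hcon => hx0 (heq.trans ((wd y x (G.symm hxy)).2 hcon))
      have hsy : C (atom (G.symm hxy)) (atom (G.symm hpq)) := by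
        rcases classify (G.symm hpq) (hconn y q) (G.symm hxy) with h | h
        · exact h
        · rw [show (atom (G.symm (G.symm hpq)) : G.Box) = atom hpq from Subtype.ext rfl] at h
          exact absurd h hy0
      have hA' := C_flip_atom hxy (G.symm hpq) hsy
      rw [show (atom (G.symm (G.symm hpq)) : G.Box) = atom hpq from Subtype.ext rfl] at hA'
      exact hA'.symm.trans hB
end BoxAux

/-- for a connected graph `G` with at least one edge, the box complex
`B(G)` is a connected poset (any two elements are joined by a finite sequence of
elements in which consecutive elements are comparable) iff `G` is not bipartite. -/
theorem box_connected_iff_nonbipartite (G : Graph')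
    (hconn : G.Connected) (hedge : ∃ x y : G.V, G.E x y) :
    (∀ a b : G.Box, Relation.ReflTransGen (fun p q : G.Box => p ≤ q ∨ q ≤ p) a b) ↔
      ¬ G.Bipartite :=
  BoxAux.main G hconn hedge
end
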